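/- Let R be a symmetric endomorphism of ∧²ℝ⁴ satisfying the first Bianchi identity. Then the sectional curvature function sec_R is nonnegative (i.e., ⟨R(X∧Y), X∧Y⟩ ≥ 0 for all decomposable unit X∧Y) if and only if there exists x ∈ ℝ such that R + x * is positive semidefinite, where * is the Hodge star operator. -/

import Mathlib

open Matrix

/-- Plücker coordinates of `X ∧ Y ∈ ∧²ℝ⁴` in the ordered basis
`e₁∧e₂, e₁∧e₃, e₁∧e₄, e₂∧e₃, e₂∧e₄, e₃∧e₄`. -/
def wedge (X Y : Fin 4 → ℝ) : Fin 6 → ℝ :=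
  ![X 0 * Y 1 - X 1 * Y 0, X 0 * Y 2 - X 2 * Y 0, X 0 * Y 3 - X 3 * Y 0,
    X 1 * Y 2 - X 2 * Y 1, X 1 * Y 3 - X 3 * Y 1, X 2 * Y 3 - X 3 * Y 2]

/-- The Hodge star operator on `∧²ℝ⁴`, in the Plücker basis:
`⟨*(α), β⟩ = ⟨e₁∧e₂∧e₃∧e₄, α∧β⟩`. -/
def hodgeStar : Matrix (Fin 6) (Fin 6) ℝ :=
  !![0,0,0,0,0,1; 0,0,0,0,-1,0; 0,0,0,1,0,0; 0,0,1,0,0,0; 0,-1,0,0,0,0; 1,0,0,0,0,0]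

/-- The first Bianchi identity for an operator on `∧²ℝ⁴`. -/
def Bianchi (R : Matrix (Fin 6) (Fin 6) ℝ) : Prop :=
  ∀ X Y Z W : Fin 4 → ℝ,
    R.mulVec (wedge X Y) ⬝ᵥ wedge Z W + R.mulVec (wedge Y Z) ⬝ᵥ wedge X W +
      R.mulVec (wedge Z X) ⬝ᵥ wedge Y W = 0

namespace ThorpeAux

section vecsimp
variable {β : Type*}
@[simp] lemma vec6_0 (a b c d e f : β) : ![a,b,c,d,e,f] 0 = a := rfl
@[simp] lemma vec6_1 (a b c d e f : β) : ![a,b,c,d,e,f] 1 = b := rfl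
@[simp] lemma vec6_2 (a b c d e f : β) : ![a,b,c,d,e,f] 2 = c := rfl
@[simp] lemma vec6_3 (a b c d e f : β) : ![a,b,c,d,e,f] 3 = d := rfl
@[simp] lemma vec6_4 (a b c d e f : β) : ![a,b,c,d,e,f] 4 = e := rfl
@[simp] lemma vec6_5 (a b c d e f : β) : ![a,b,c,d,e,f] 5 = f := rfl
@[simp] lemma vec4_0 (a b c d : β) : ![a,b,c,d] 0 = a := rfl
@[simp] lemma vec4_1 (a b c d : β) : ![a,b,c,d] 1 = b := rfl
@[simp] lemma vec4_2 (a b c d : β) : ![a,b,c,d] 2 = c := rfl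
@[simp] lemma vec4_3 (a b c d : β) : ![a,b,c,d] 3 = d := rfl
end vecsimp

/-- quadratic form of a matrix -/
def quad (M : Matrix (Fin 6) (Fin 6) ℝ) (α : Fin 6 → ℝ) : ℝ := M.mulVec α ⬝ᵥ α

/-- the unit sphere w.r.t. dot product -/
def Sph : Set (Fin 6 → ℝ) := {α | α ⬝ᵥ α = 1}

lemma quad_expand (M : Matrix (Fin 6) (Fin 6) ℝ) (α : Fin 6 → ℝ) :
    quad M α = ∑ i, (∑ j, M i j * α j) * α i := by
  simp [quad, Matrix.mulVec, dotProduct]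

lemma quad_hodge (α : Fin 6 → ℝ) :
    quad hodgeStar α = 2 * (α 0 * α 5 - α 1 * α 4 + α 2 * α 3) := by
  simp only [quad_expand, Fin.sum_univ_six, hodgeStar, Matrix.of_apply,
    vec6_0, vec6_1, vec6_2, vec6_3, vec6_4, vec6_5]
  ring

lemma quad_hodge_wedge (X Y : Fin 4 → ℝ) : quad hodgeStar (wedge X Y) = 0 := by
  simp only [quad_hodge, wedge, vec6_0, vec6_1, vec6_2, vec6_3, vec6_4, vec6_5]
  ring

lemma continuous_quad (M : Matrix (Fin 6) (Fin 6) ℝ) : Continuous (quad M) := by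
  have : quad M = fun α => ∑ i, (∑ j, M i j * α j) * α i := funext fun α => quad_expand M α
  rw [this]
  exact continuous_finset_sum _ fun i _ =>
    ((continuous_finset_sum _ fun j _ => (continuous_const.mul (continuous_apply j))).mul
      (continuous_apply i))

lemma quad_add (M N : Matrix (Fin 6) (Fin 6) ℝ) (α : Fin 6 → ℝ) :
    quad (M + N) α = quad M α + quad N α := by
  simp [quad, Matrix.add_mulVec, add_dotProduct]

lemma quad_smul (x : ℝ) (M : Matrix (Fin 6) (Fin 6) ℝ) (α : Fin 6 → ℝ) :
    quad (x • M) α = x * quad M α := by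
  simp [quad, Matrix.smul_mulVec, smul_dotProduct]

lemma quad_smul_vec (M : Matrix (Fin 6) (Fin 6) ℝ) (c : ℝ) (α : Fin 6 → ℝ) :
    quad M (c • α) = c ^ 2 * quad M α := by
  simp [quad, Matrix.mulVec_smul, smul_dotProduct, dotProduct_smul]
  ring

lemma dot_smul_smul (c : ℝ) (α : Fin 6 → ℝ) : (c • α) ⬝ᵥ (c • α) = c ^ 2 * (α ⬝ᵥ α) := by
  simp [smul_dotProduct, dotProduct_smul]; ring

lemma dot_self_nonneg (α : Fin 6 → ℝ) : 0 ≤ α ⬝ᵥ α :=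
  Finset.sum_nonneg fun i _ => mul_self_nonneg _

lemma dot_self_eq_zero {α : Fin 6 → ℝ} (h : α ⬝ᵥ α = 0) : α = 0 := by
  funext i
  have h2 : ∀ j ∈ Finset.univ, (0:ℝ) ≤ α j * α j := fun j _ => mul_self_nonneg _
  have := (Finset.sum_eq_zero_iff_of_nonneg h2).mp h i (Finset.mem_univ i)
  exact mul_self_eq_zero.mp this

lemma continuous_dot_self : Continuous (fun α : Fin 6 → ℝ => α ⬝ᵥ α) := by
  have : (fun α : Fin 6 → ℝ => α ⬝ᵥ α) = fun α => ∑ i, α i * α i := by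
    funext α; simp [dotProduct]
  rw [this]
  exact continuous_finset_sum _ fun i _ => (continuous_apply i).mul (continuous_apply i)

lemma isCompact_sph : IsCompact Sph := by
  have hc : IsClosed Sph := isClosed_eq continuous_dot_self continuous_const
  refine Metric.isCompact_of_isClosed_isBounded hc ?_
  rw [Metric.isBounded_iff_subset_closedBall 0]
  refine ⟨1, fun α hα => ?_⟩
  simp only [Metric.mem_closedBall, dist_zero_right]
  rw [pi_norm_le_iff_of_nonneg zero_le_one]
  intro i
  have h1 : α i * α i ≤ α ⬝ᵥ α := by
    have := Finset.single_le_sum (f := fun j => α j * α j)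
      (fun j _ => mul_self_nonneg _) (Finset.mem_univ i)
    simpa [dotProduct] using this
  rw [hα] at h1
  rw [Real.norm_eq_abs, abs_le]
  constructor <;> nlinarith

lemma quad_hodge_abs_le {α : Fin 6 → ℝ} (hα : α ∈ Sph) : |quad hodgeStar α| ≤ 1 := by
  have h : α ⬝ᵥ α = 1 := hα
  have h2 : α ⬝ᵥ α = α 0 * α 0 + α 1 * α 1 + α 2 * α 2 + α 3 * α 3 + α 4 * α 4 + α 5 * α 5 := by
    simp [dotProduct, Fin.sum_univ_six]
  rw [quad_hodge, abs_le]
  constructor <;> nlinarith [sq_nonneg (α 0 + α 5), sq_nonneg (α 0 - α 5), sq_nonneg (α 1 + α 4),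
    sq_nonneg (α 1 - α 4), sq_nonneg (α 2 + α 3), sq_nonneg (α 2 - α 3)]

lemma symm_bilin {M : Matrix (Fin 6) (Fin 6) ℝ} (hM : M.IsSymm) (u v : Fin 6 → ℝ) :
    M.mulVec u ⬝ᵥ v = M.mulVec v ⬝ᵥ u := by
  rw [dotProduct_comm (M.mulVec u) v, Matrix.dotProduct_mulVec]
  congr 1
  rw [← Matrix.mulVec_transpose, hM.eq]

lemma quad_add_vec (M : Matrix (Fin 6) (Fin 6) ℝ) (u v : Fin 6 → ℝ) :
    quad M (u + v) = quad M u + (M.mulVec u ⬝ᵥ v + M.mulVec v ⬝ᵥ u) + quad M v := by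
  simp [quad, Matrix.mulVec_add, add_dotProduct, dotProduct_add]
  ring



lemma plucker {γ : Fin 6 → ℝ} (h : γ 0 * γ 5 - γ 1 * γ 4 + γ 2 * γ 3 = 0) :
    ∃ X Y : Fin 4 → ℝ, wedge X Y = γ := by
  set a := γ 0 with ha'
  set b := γ 1 with hb'
  set c := γ 2 with hc'
  set d := γ 3 with hd'
  set e := γ 4 with he'
  set f := γ 5 with hf'
  have key : ∀ X Y : Fin 4 → ℝ,
      X 0 * Y 1 - X 1 * Y 0 = a → X 0 * Y 2 - X 2 * Y 0 = b → X 0 * Y 3 - X 3 * Y 0 = c →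
      X 1 * Y 2 - X 2 * Y 1 = d → X 1 * Y 3 - X 3 * Y 1 = e → X 2 * Y 3 - X 3 * Y 2 = f →
      wedge X Y = γ := by
    intro X Y h1 h2 h3 h4 h5 h6
    funext i
    fin_cases i <;> simpa [wedge]
  by_cases hA : a ≠ 0
  · refine ⟨![0, a, b, c], ![-1, 0, d / a, e / a], key _ _ ?_ ?_ ?_ ?_ ?_ ?_⟩ <;>
      simp <;> field_simp <;> (first
        | (first
        | linear_combination h
        | linear_combination -h
        | linear_combination (1 - a) * h | linear_combination (1 + a) * h
        | linear_combination (1 - b) * h | linear_combination (1 + b) * h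
        | linear_combination (1 - c) * h | linear_combination (1 + c) * h
        | linear_combination (1 - d) * h | linear_combination (1 + d) * h
        | linear_combination (1 - e) * h | linear_combination (1 + e) * h
        | linear_combination (1 - f) * h | linear_combination (1 + f) * h
        | linear_combination a * h | linear_combination -a * h
        | linear_combination b * h | linear_combination -b * h
        | linear_combination c * h | linear_combination -c * h
        | linear_combination d * h | linear_combination -d * h
        | linear_combination e * h | linear_combination -e * h
        | linear_combination f * h | linear_combination -f * h)
        | linear_combination -h
        | linear_combination (1 - a) * h | linear_combination (1 + a) * h
        | linear_combination (1 - b) * h | linear_combination (1 + b) * h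
        | linear_combination (1 - c) * h | linear_combination (1 + c) * h
        | linear_combination (1 - d) * h | linear_combination (1 + d) * h
        | linear_combination (1 - e) * h | linear_combination (1 + e) * h
        | linear_combination (1 - f) * h | linear_combination (1 + f) * h
        | linear_combination a * h | linear_combination -a * h
        | linear_combination b * h | linear_combination -b * h
        | linear_combination c * h | linear_combination -c * h
        | linear_combination d * h | linear_combination -d * h
        | linear_combination e * h | linear_combination -e * h
        | linear_combination f * h | linear_combination -f * h)
  by_cases hB : b ≠ 0
  · refine ⟨![0, a, b, c], ![-1, -(d / b), 0, f / b], key _ _ ?_ ?_ ?_ ?_ ?_ ?_⟩ <;>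
      simp <;> field_simp <;> (first
        | linear_combination h
        | linear_combination -h
        | linear_combination (1 - a) * h | linear_combination (1 + a) * h
        | linear_combination (1 - b) * h | linear_combination (1 + b) * h
        | linear_combination (1 - c) * h | linear_combination (1 + c) * h
        | linear_combination (1 - d) * h | linear_combination (1 + d) * h
        | linear_combination (1 - e) * h | linear_combination (1 + e) * h
        | linear_combination (1 - f) * h | linear_combination (1 + f) * h
        | linear_combination a * h | linear_combination -a * h
        | linear_combination b * h | linear_combination -b * h
        | linear_combination c * h | linear_combination -c * h
        | linear_combination d * h | linear_combination -d * h
        | linear_combination e * h | linear_combination -e * h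
        | linear_combination f * h | linear_combination -f * h)
  by_cases hC : c ≠ 0
  · refine ⟨![0, a, b, c], ![-1, -(e / c), -(f / c), 0], key _ _ ?_ ?_ ?_ ?_ ?_ ?_⟩ <;>
      simp <;> field_simp <;> (first
        | (first
        | linear_combination h
        | linear_combination -h
        | linear_combination (1 - a) * h | linear_combination (1 + a) * h
        | linear_combination (1 - b) * h | linear_combination (1 + b) * h
        | linear_combination (1 - c) * h | linear_combination (1 + c) * h
        | linear_combination (1 - d) * h | linear_combination (1 + d) * h
        | linear_combination (1 - e) * h | linear_combination (1 + e) * h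
        | linear_combination (1 - f) * h | linear_combination (1 + f) * h
        | linear_combination a * h | linear_combination -a * h
        | linear_combination b * h | linear_combination -b * h
        | linear_combination c * h | linear_combination -c * h
        | linear_combination d * h | linear_combination -d * h
        | linear_combination e * h | linear_combination -e * h
        | linear_combination f * h | linear_combination -f * h)
        | linear_combination -h
        | linear_combination (1 - a) * h | linear_combination (1 + a) * h
        | linear_combination (1 - b) * h | linear_combination (1 + b) * h
        | linear_combination (1 - c) * h | linear_combination (1 + c) * h
        | linear_combination (1 - d) * h | linear_combination (1 + d) * h
        | linear_combination (1 - e) * h | linear_combination (1 + e) * h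
        | linear_combination (1 - f) * h | linear_combination (1 + f) * h
        | linear_combination a * h | linear_combination -a * h
        | linear_combination b * h | linear_combination -b * h
        | linear_combination c * h | linear_combination -c * h
        | linear_combination d * h | linear_combination -d * h
        | linear_combination e * h | linear_combination -e * h
        | linear_combination f * h | linear_combination -f * h)
  by_cases hD : d ≠ 0
  · refine ⟨![-a, 0, d, e], ![-(b / d), -1, 0, f / d], key _ _ ?_ ?_ ?_ ?_ ?_ ?_⟩ <;>
      simp <;> field_simp <;> (first
        | (first
        | linear_combination h
        | linear_combination -h
        | linear_combination (1 - a) * h | linear_combination (1 + a) * h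
        | linear_combination (1 - b) * h | linear_combination (1 + b) * h
        | linear_combination (1 - c) * h | linear_combination (1 + c) * h
        | linear_combination (1 - d) * h | linear_combination (1 + d) * h
        | linear_combination (1 - e) * h | linear_combination (1 + e) * h
        | linear_combination (1 - f) * h | linear_combination (1 + f) * h
        | linear_combination a * h | linear_combination -a * h
        | linear_combination b * h | linear_combination -b * h
        | linear_combination c * h | linear_combination -c * h
        | linear_combination d * h | linear_combination -d * h
        | linear_combination e * h | linear_combination -e * h
        | linear_combination f * h | linear_combination -f * h)
        | linear_combination -h
        | linear_combination (1 - a) * h | linear_combination (1 + a) * h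
        | linear_combination (1 - b) * h | linear_combination (1 + b) * h
        | linear_combination (1 - c) * h | linear_combination (1 + c) * h
        | linear_combination (1 - d) * h | linear_combination (1 + d) * h
        | linear_combination (1 - e) * h | linear_combination (1 + e) * h
        | linear_combination (1 - f) * h | linear_combination (1 + f) * h
        | linear_combination a * h | linear_combination -a * h
        | linear_combination b * h | linear_combination -b * h
        | linear_combination c * h | linear_combination -c * h
        | linear_combination d * h | linear_combination -d * h
        | linear_combination e * h | linear_combination -e * h
        | linear_combination f * h | linear_combination -f * h)
  by_cases hE : e ≠ 0
  · refine ⟨![-a, 0, d, e], ![-(c / e), -1, -(f / e), 0], key _ _ ?_ ?_ ?_ ?_ ?_ ?_⟩ <;>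
      simp <;> field_simp <;> (first
        | linear_combination h
        | linear_combination -h
        | linear_combination (1 - a) * h | linear_combination (1 + a) * h
        | linear_combination (1 - b) * h | linear_combination (1 + b) * h
        | linear_combination (1 - c) * h | linear_combination (1 + c) * h
        | linear_combination (1 - d) * h | linear_combination (1 + d) * h
        | linear_combination (1 - e) * h | linear_combination (1 + e) * h
        | linear_combination (1 - f) * h | linear_combination (1 + f) * h
        | linear_combination a * h | linear_combination -a * h
        | linear_combination b * h | linear_combination -b * h
        | linear_combination c * h | linear_combination -c * h
        | linear_combination d * h | linear_combination -d * h
        | linear_combination e * h | linear_combination -e * h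
        | linear_combination f * h | linear_combination -f * h)
  by_cases hF : f ≠ 0
  · refine ⟨![-b, -d, 0, f], ![-(c / f), -(e / f), -1, 0], key _ _ ?_ ?_ ?_ ?_ ?_ ?_⟩ <;>
      simp <;> field_simp <;> (first
        | linear_combination h
        | linear_combination -h
        | linear_combination (1 - a) * h | linear_combination (1 + a) * h
        | linear_combination (1 - b) * h | linear_combination (1 + b) * h
        | linear_combination (1 - c) * h | linear_combination (1 + c) * h
        | linear_combination (1 - d) * h | linear_combination (1 + d) * h
        | linear_combination (1 - e) * h | linear_combination (1 + e) * h
        | linear_combination (1 - f) * h | linear_combination (1 + f) * h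
        | linear_combination a * h | linear_combination -a * h
        | linear_combination b * h | linear_combination -b * h
        | linear_combination c * h | linear_combination -c * h
        | linear_combination d * h | linear_combination -d * h
        | linear_combination e * h | linear_combination -e * h
        | linear_combination f * h | linear_combination -f * h)
  push_neg at hA hB hC hD hE hF
  refine ⟨0, 0, key _ _ ?_ ?_ ?_ ?_ ?_ ?_⟩ <;> simp [hA, hB, hC, hD, hE, hF]


lemma sph_nonempty : Sph.Nonempty := by
  refine ⟨![1,0,0,0,0,0], ?_⟩
  simp [Sph, dotProduct, Fin.sum_univ_six]

lemma quad_neg (M : Matrix (Fin 6) (Fin 6) ℝ) (α : Fin 6 → ℝ) : quad (-M) α = -quad M α := by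
  simp [quad, Matrix.neg_mulVec, neg_dotProduct]

lemma quad_zero_vec (M : Matrix (Fin 6) (Fin 6) ℝ) : quad M 0 = 0 := by
  simp [quad]

lemma push (T H : Matrix (Fin 6) (Fin 6) ℝ) (m : ℝ)
    (hHb : ∀ α ∈ Sph, -1 ≤ quad H α)
    (hm : ∀ α ∈ Sph, m ≤ quad T α)
    (hmin : ∀ α ∈ Sph, quad T α = m → 0 < quad H α) :
    ∃ t > 0, ∃ c > 0, ∀ α ∈ Sph, m + c ≤ quad T α + t * quad H α := by
  have hGcont : Continuous fun α => max (quad T α - m) (quad H α) :=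
    ((continuous_quad T).sub continuous_const).max (continuous_quad H)
  obtain ⟨α₀, hα₀S, hα₀⟩ := isCompact_sph.exists_isMinOn sph_nonempty hGcont.continuousOn
  set cG := max (quad T α₀ - m) (quad H α₀) with hcG'
  have hcG : 0 < cG := by
    rcases eq_or_lt_of_le (hm α₀ hα₀S) with h | h
    · exact lt_max_of_lt_right (hmin α₀ hα₀S h.symm)
    · exact lt_max_of_lt_left (by linarith)
  have hGlb : ∀ α ∈ Sph, cG ≤ max (quad T α - m) (quad H α) := fun α hα => hα₀ hα
  refine ⟨cG / 2, by linarith, min (cG * cG / 2) (cG / 2), by positivity, fun α hα => ?_⟩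
  rcases le_max_iff.mp (hGlb α hα) with h | h
  · -- quad T α ≥ m + cG
    have h1 := hHb α hα
    have h2 : min (cG * cG / 2) (cG / 2) ≤ cG / 2 := min_le_right _ _
    nlinarith
  · -- quad H α ≥ cG
    have h1 := hm α hα
    have h2 : min (cG * cG / 2) (cG / 2) ≤ cG * cG / 2 := min_le_left _ _
    nlinarith

lemma hodge_symm : hodgeStar.IsSymm := by
  ext i j
  fin_cases i <;> fin_cases j <;> rfl

end ThorpeAux

open ThorpeAux

/-- **Thorpe's trick**: a symmetric endomorphism `R` of `∧²ℝ⁴` satisfying the first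
Bianchi identity has `sec_R ≥ 0` (i.e. `⟨R(X∧Y), X∧Y⟩ ≥ 0` for all decomposable unit
`X∧Y`) if and only if `R + x *` is positive semidefinite for some `x ∈ ℝ`. -/

theorem thorpe_trick (R : Matrix (Fin 6) (Fin 6) ℝ) (hsymm : R.IsSymm)
    (hb : Bianchi R) :
    (∀ X Y : Fin 4 → ℝ, wedge X Y ⬝ᵥ wedge X Y = 1 →
      0 ≤ R.mulVec (wedge X Y) ⬝ᵥ wedge X Y) ↔
    ∃ x : ℝ, (R + x • hodgeStar).PosSemidef := by
  have hquad_split : ∀ (x : ℝ) (β : Fin 6 → ℝ),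
      quad (R + x • hodgeStar) β = quad R β + x * quad hodgeStar β := by
    intro x β; rw [quad_add, quad_smul]
  constructor
  · intro hsec
    -- minimizers of the quadratic form on the sphere, for each x
    have exmin : ∀ x : ℝ, ∃ α, α ∈ Sph ∧ ∀ β ∈ Sph,
        quad (R + x • hodgeStar) α ≤ quad (R + x • hodgeStar) β := by
      intro x
      obtain ⟨α, hαS, hmin⟩ := isCompact_sph.exists_isMinOn sph_nonempty
        (continuous_quad (R + x • hodgeStar)).continuousOn
      exact ⟨α, hαS, fun β hβ => hmin hβ⟩
    choose αf hαfS hαfmin using exmin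
    set F : ℝ → ℝ := fun x => quad (R + x • hodgeStar) (αf x) with hF
    -- Lipschitz-type bound
    have hFdiff : ∀ x y : ℝ, F x ≤ F y + |x - y| := by
      intro x y
      have h1 : F x ≤ quad (R + x • hodgeStar) (αf y) := hαfmin x _ (hαfS y)
      have h2 : quad (R + x • hodgeStar) (αf y)
          = F y + (x - y) * quad hodgeStar (αf y) := by
        rw [hF]; simp only [hquad_split]; ring
      have h3 : |quad hodgeStar (αf y)| ≤ 1 := quad_hodge_abs_le (hαfS y)
      have h4 : (x - y) * quad hodgeStar (αf y) ≤ |x - y| := by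
        calc (x - y) * quad hodgeStar (αf y) ≤ |(x - y) * quad hodgeStar (αf y)| := le_abs_self _
        _ = |x - y| * |quad hodgeStar (αf y)| := abs_mul _ _
        _ ≤ |x - y| * 1 := by
            exact mul_le_mul_of_nonneg_left h3 (abs_nonneg _)
        _ = |x - y| := mul_one _
      linarith
    have hFcont : Continuous F := by
      refine (LipschitzWith.of_dist_le_mul (K := 1) fun x y => ?_).continuous
      rw [Real.dist_eq, Real.dist_eq, show ((1:NNReal):ℝ) = 1 by norm_num, one_mul, abs_le]
      constructor
      · have := hFdiff y x; rw [abs_sub_comm] at this; linarith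
      · have := hFdiff x y; linarith
    -- upper bounds forcing decay
    set s : ℝ := Real.sqrt (1/2) with hs'
    have hs2 : s * s = 1/2 := Real.mul_self_sqrt (by norm_num)
    set u : Fin 6 → ℝ := ![s,0,0,0,0,s] with hu'
    set v : Fin 6 → ℝ := ![s,0,0,0,0,-s] with hv'
    have huS : u ∈ Sph := by
      simp [Sph, hu', dotProduct, Fin.sum_univ_six]; linarith
    have hvS : v ∈ Sph := by
      simp [Sph, hv', dotProduct, Fin.sum_univ_six]; linarith
    have hqu : quad hodgeStar u = 1 := by simp [quad_hodge, hu']; linarith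
    have hqv : quad hodgeStar v = -1 := by simp [quad_hodge, hv']; linarith
    set c₁ : ℝ := quad R u with hc₁
    set c₂ : ℝ := quad R v with hc₂
    have hb₁ : ∀ x : ℝ, F x ≤ c₁ + x := by
      intro x
      have := hαfmin x u huS
      simp only [hquad_split] at this
      rw [hqu] at this
      have hFx : F x = quad R (αf x) + x * quad hodgeStar (αf x) := hquad_split x (αf x)
      linarith
    have hb₂ : ∀ x : ℝ, F x ≤ c₂ - x := by
      intro x
      have := hαfmin x v hvS
      simp only [hquad_split] at this
      rw [hqv] at this
      have hFx : F x = quad R (αf x) + x * quad hodgeStar (αf x) := hquad_split x (αf x)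
      linarith
    -- global maximum of F
    set K : ℝ := |c₁| + |c₂| + |F 0| + 1 with hK
    have hKpos : (0:ℝ) < K := by
      rw [hK]
      have := abs_nonneg c₁; have := abs_nonneg c₂; have := abs_nonneg (F 0)
      linarith
    have hK0 : (0:ℝ) ∈ Set.Icc (-K) K := ⟨by linarith, by linarith⟩
    obtain ⟨x₀, hx₀I, hx₀max⟩ := isCompact_Icc.exists_isMaxOn ⟨0, hK0⟩ hFcont.continuousOn
    have hmax : ∀ x : ℝ, F x ≤ F x₀ := by
      intro x
      rcases le_or_gt x K with h1 | h1
      · rcases le_or_gt (-K) x with h2 | h2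
        · exact hx₀max ⟨h2, h1⟩
        · have := hb₁ x
          have hF0 : F 0 ≤ F x₀ := hx₀max hK0
          have := le_abs_self c₁; have := neg_abs_le (F 0); have := abs_nonneg c₂
          simp only [hK] at h2
          linarith
      · have := hb₂ x
        have hF0 : F 0 ≤ F x₀ := hx₀max hK0
        have := le_abs_self c₂; have := neg_abs_le (F 0); have := abs_nonneg c₁
        simp only [hK] at h1
        linarith
    set T₀ : Matrix (Fin 6) (Fin 6) ℝ := R + x₀ • hodgeStar with hT₀
    set m : ℝ := F x₀ with hm'
    have hmlb : ∀ β ∈ Sph, m ≤ quad T₀ β := fun β hβ => hαfmin x₀ β hβ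
    -- scaling: quad T₀ v ≥ m * (v ⬝ᵥ v) for all v
    have hscale : ∀ w : Fin 6 → ℝ, m * (w ⬝ᵥ w) ≤ quad T₀ w := by
      intro w
      by_cases hw : w = 0
      · simp [hw, quad_zero_vec]
      · have hn0 : 0 < w ⬝ᵥ w := by
          rcases lt_or_eq_of_le (dot_self_nonneg w) with h | h
          · exact h
          · exact absurd (dot_self_eq_zero h.symm) hw
        set n : ℝ := w ⬝ᵥ w with hn'
        have hsq : Real.sqrt n * Real.sqrt n = n := Real.mul_self_sqrt hn0.le
        have hsqpos : 0 < Real.sqrt n := Real.sqrt_pos.mpr hn0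
        have hwS : (Real.sqrt n)⁻¹ • w ∈ Sph := by
          show ((Real.sqrt n)⁻¹ • w) ⬝ᵥ ((Real.sqrt n)⁻¹ • w) = 1
          rw [dot_smul_smul, ← hn']
          field_simp [pow_two]
          exact (Real.sq_sqrt hn0.le).symm
        have := hmlb _ hwS
        rw [quad_smul_vec] at this
        have h2 : ((Real.sqrt n)⁻¹) ^ 2 = n⁻¹ := by
          rw [pow_two]; field_simp [hsq]
          exact (Real.sq_sqrt hn0.le).symm
        rw [h2] at this
        calc m * n ≤ (n⁻¹ * quad T₀ w) * n :=
              mul_le_mul_of_nonneg_right this hn0.le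
        _ = quad T₀ w := by field_simp
    by_cases hmn : 0 ≤ m
    · -- R + x₀ * is PSD
      refine ⟨x₀, Matrix.PosSemidef.of_dotProduct_mulVec_nonneg ?_ fun w => ?_⟩
      · show (R + x₀ • hodgeStar)ᴴ = R + x₀ • hodgeStar
        rw [Matrix.conjTranspose_eq_transpose_of_trivial]
        show (R + x₀ • hodgeStar)ᵀ = _
        rw [Matrix.transpose_add, Matrix.transpose_smul, hsymm.eq, hodge_symm.eq]
      · have h1 : m * (w ⬝ᵥ w) ≤ quad T₀ w := hscale w
        have h2 : 0 ≤ quad T₀ w :=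
          le_trans (mul_nonneg hmn (dot_self_nonneg w)) h1
        show 0 ≤ star w ⬝ᵥ ((R + x₀ • hodgeStar) *ᵥ w)
        rw [show star w = w from funext fun i => star_trivial _]
        rw [dotProduct_comm]
        exact h2
    · exfalso
      push_neg at hmn
      have hT₀symm : T₀.IsSymm := by
        show (R + x₀ • hodgeStar)ᵀ = R + x₀ • hodgeStar
        rw [Matrix.transpose_add, Matrix.transpose_smul, hsymm.eq, hodge_symm.eq]
      -- main case analysis
      by_cases hplus : ∃ α ∈ Sph, quad T₀ α = m ∧ 0 ≤ quad hodgeStar α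
      · by_cases hminus : ∃ β ∈ Sph, quad T₀ β = m ∧ quad hodgeStar β ≤ 0
        · -- case iii: build a decomposable minimizer
          obtain ⟨α, hαS, hαm, hαH⟩ := hplus
          obtain ⟨β, hβS, hβm, hβH⟩ := hminus
          -- the nonnegative quadratic Q
          set Q : (Fin 6 → ℝ) → ℝ := fun w => quad T₀ w - m * (w ⬝ᵥ w) with hQ'
          have hQ0 : ∀ w, 0 ≤ Q w := fun w => by simp only [hQ']; linarith [hscale w]
          have hQα : Q α = 0 := by simp only [hQ', hαm, hαS.out]; ring
          have hQβ : Q β = 0 := by simp only [hQ', hβm, hβS.out]; ring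
          -- cross term vanishes
          set B : ℝ := T₀.mulVec α ⬝ᵥ β - m * (α ⬝ᵥ β) with hB'
          have hQexp : ∀ p q : ℝ, Q (p • α + q • β)
              = p^2 * Q α + 2 * p * q * B + q^2 * Q β := by
            intro p q
            have e1 : quad T₀ (p • α + q • β) = p^2 * quad T₀ α
                + 2 * p * q * (T₀.mulVec α ⬝ᵥ β) + q^2 * quad T₀ β := by
              rw [quad_add_vec, quad_smul_vec, quad_smul_vec]
              have e2 : T₀.mulVec (p • α) ⬝ᵥ (q • β) = p * q * (T₀.mulVec α ⬝ᵥ β) := by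
                rw [Matrix.mulVec_smul, smul_dotProduct, dotProduct_smul]
                simp [smul_eq_mul]; ring
              have e3 : T₀.mulVec (q • β) ⬝ᵥ (p • α) = p * q * (T₀.mulVec α ⬝ᵥ β) := by
                rw [Matrix.mulVec_smul, smul_dotProduct, dotProduct_smul]
                rw [symm_bilin hT₀symm β α]
                simp [smul_eq_mul]; ring
              rw [e2, e3]; ring
            have e4 : (p • α + q • β) ⬝ᵥ (p • α + q • β)
                = p^2 * (α ⬝ᵥ α) + 2 * p * q * (α ⬝ᵥ β) + q^2 * (β ⬝ᵥ β) := by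
              simp only [add_dotProduct, dotProduct_add,
                smul_dotProduct, dotProduct_smul, smul_eq_mul]
              rw [dotProduct_comm β α]
              ring
            simp only [hQ', e1, e4]
            ring
          have hBzero : B = 0 := by
            have h1 := hQ0 ((1:ℝ) • α + (-B) • β)
            rw [hQexp 1 (-B), hQα, hQβ] at h1
            nlinarith
          -- find a unit vector in null space of Q with zero Hodge form
          have hfind : ∃ w, w ⬝ᵥ w = 1 ∧ quad hodgeStar w = 0 ∧ quad T₀ w = m := by
            rcases eq_or_lt_of_le hβH with hβ0 | hβneg
            · refine ⟨β, hβS.out, hβ0.symm ▸ rfl, hβm⟩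
            rcases eq_or_lt_of_le hαH with hα0 | hαpos
            · exact ⟨α, hαS.out, hα0.symm, hαm⟩
            -- strict signs: IVT along the segment
            set path : ℝ → (Fin 6 → ℝ) := fun t => (1 - t) • α + t • β with hpath'
            have hpc : Continuous fun t => quad hodgeStar (path t) := by
              refine (continuous_quad hodgeStar).comp ?_
              exact ((continuous_const.sub continuous_id).smul continuous_const).add
                (continuous_id.smul continuous_const)
            have hiv : (0:ℝ) ∈ Set.Icc (quad hodgeStar (path 1)) (quad hodgeStar (path 0)) := by
              have h0 : path 0 = α := by simp [hpath']
              have h1 : path 1 = β := by simp [hpath']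
              rw [h0, h1]
              exact ⟨hβH, hαH⟩
            obtain ⟨t, htI, htv⟩ := intermediate_value_Icc' (by norm_num : (0:ℝ) ≤ 1)
              hpc.continuousOn hiv
            set w₀ : Fin 6 → ℝ := path t with hw₀'
            have hQw₀ : Q w₀ = 0 := by
              have := hQexp (1 - t) t
              rw [hQα, hQβ, hBzero] at this
              simpa [hpath', hw₀'] using this
            have hn0 : w₀ ⬝ᵥ w₀ ≠ 0 := by
              intro hzero
              have hw0 : w₀ = 0 := dot_self_eq_zero hzero
              have hrel : (1 - t) • α = (-t) • β := by
                have h00 : (1 - t) • α + t • β = 0 := hw0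
                rw [neg_smul]
                exact eq_neg_of_add_eq_zero_left h00
              have hq2 : (1-t)^2 * quad hodgeStar α = (-t)^2 * quad hodgeStar β := by
                rw [← quad_smul_vec, ← quad_smul_vec, hrel]
              have e1 : (0:ℝ) ≤ (1-t)^2 * quad hodgeStar α :=
                mul_nonneg (sq_nonneg _) hαpos.le
              have e2 : (-t)^2 * quad hodgeStar β ≤ 0 :=
                mul_nonpos_of_nonneg_of_nonpos (sq_nonneg _) hβneg.le
              have e3 : (1 - t)^2 = 0 := by
                have h0 : (1-t)^2 * quad hodgeStar α = 0 :=
                  le_antisymm (by rw [hq2]; exact e2) e1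
                rcases mul_eq_zero.mp h0 with h | h
                · exact h
                · exact absurd h (ne_of_gt hαpos)
              have ht1 : 1 - t = 0 := pow_eq_zero_iff two_ne_zero |>.mp e3
              have h7 : t = 1 := by linarith
              rw [h7] at hq2
              norm_num at hq2
              linarith
            have hnpos : 0 < w₀ ⬝ᵥ w₀ :=
              lt_of_le_of_ne (dot_self_nonneg w₀) (Ne.symm hn0)
            set n : ℝ := w₀ ⬝ᵥ w₀ with hn'
            have hsq : Real.sqrt n * Real.sqrt n = n := Real.mul_self_sqrt hnpos.le
            have hsqpos : 0 < Real.sqrt n := Real.sqrt_pos.mpr hnpos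
            refine ⟨(Real.sqrt n)⁻¹ • w₀, ?_, ?_, ?_⟩
            · rw [dot_smul_smul, ← hn', pow_two]; field_simp [hsq]
              exact (Real.sq_sqrt hnpos.le).symm
            · rw [quad_smul_vec]
              have : quad hodgeStar w₀ = 0 := htv
              rw [this]; ring
            · have h2 : ((Real.sqrt n)⁻¹) ^ 2 = n⁻¹ := by
                rw [pow_two]; field_simp [hsq]
                exact (Real.sq_sqrt hnpos.le).symm
              have hq : quad T₀ w₀ = m * n := by
                have := hQw₀; simp only [hQ'] at this; rw [← hn'] at this; linarith
              rw [quad_smul_vec, h2, hq]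
              field_simp
          obtain ⟨w, hw1, hwH, hwT⟩ := hfind
          -- w is decomposable
          have hrel : w 0 * w 5 - w 1 * w 4 + w 2 * w 3 = 0 := by
            rw [quad_hodge] at hwH; linarith
          obtain ⟨X, Y, hXY⟩ := plucker hrel
          have hunit : wedge X Y ⬝ᵥ wedge X Y = 1 := by rw [hXY]; exact hw1
          have hsecw := hsec X Y hunit
          rw [hXY] at hsecw
          -- but quad R w = m < 0
          have : quad R w = m := by
            have := hquad_split x₀ w
            rw [← hT₀] at this
            rw [hwT, hwH] at this  -- careful
            linarith
          have : (0:ℝ) ≤ m := by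
            rw [← this]; exact hsecw
          linarith
        · -- all minimizers have negative Hodge form: push with -hodgeStar
          push_neg at hminus
          obtain ⟨t, ht, c, hc, hineq⟩ := push T₀ hodgeStar m
            (fun α hα => by
              have := quad_hodge_abs_le hα
              rw [abs_le] at this; linarith)
            hmlb
            (fun α hα hαm => hminus α hα hαm)
          set β := αf (x₀ + t) with hβ'
          have h1 : F (x₀ + t) ≤ m := hmax (x₀ + t)
          have h2 : m + c ≤ quad T₀ β + t * quad hodgeStar β := hineq β (hαfS _)
          have h3 : F (x₀ + t) = quad T₀ β + t * quad hodgeStar β := by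
            rw [hF]
            show quad (R + (x₀ + t) • hodgeStar) β = _
            rw [hquad_split, hT₀, hquad_split]
            ring
          linarith
      · -- all minimizers have positive Hodge form: push with hodgeStar
        push_neg at hplus
        obtain ⟨t, ht, c, hc, hineq⟩ := push T₀ (-hodgeStar) m
          (fun α hα => by
            rw [quad_neg]
            have := quad_hodge_abs_le hα
            rw [abs_le] at this; linarith)
          hmlb
          (fun α hα hαm => by
            rw [quad_neg]
            have := hplus α hα hαm
            linarith)
        set β := αf (x₀ - t) with hβ'
        have h1 : F (x₀ - t) ≤ m := hmax (x₀ - t)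
        have h2 : m + c ≤ quad T₀ β + t * quad (-hodgeStar) β := hineq β (hαfS _)
        rw [quad_neg] at h2
        have h3 : F (x₀ - t) = quad T₀ β - t * quad hodgeStar β := by
          rw [hF]
          show quad (R + (x₀ - t) • hodgeStar) β = _
          rw [hquad_split, hT₀, hquad_split]
          ring
        linarith
  · rintro ⟨x, hxpsd⟩ X Y hunit
    have h0 := hxpsd.dotProduct_mulVec_nonneg (wedge X Y)
    rw [show star (wedge X Y) = wedge X Y from funext fun i => star_trivial _] at h0
    rw [dotProduct_comm] at h0
    have h1 : quad (R + x • hodgeStar) (wedge X Y)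
        = R.mulVec (wedge X Y) ⬝ᵥ wedge X Y + x * quad hodgeStar (wedge X Y) := by
      rw [hquad_split]; rfl
    rw [quad_hodge_wedge] at h1
    have : quad (R + x • hodgeStar) (wedge X Y) = R.mulVec (wedge X Y) ⬝ᵥ wedge X Y := by
      rw [h1]; ring
    rw [← this]
    exact h0
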